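/- For every self-admissible word ω of length n, the length of the parameter cylinder satisfies |I_n^P(ω)| ≤ β̄(ω)^{-n+1}, where β̄(ω) is the right endpoint of I_n^P(ω). -/

import Mathlib

open Filter Topology

/-- The β-transformation `T_β x = βx - ⌊βx⌋`. -/
noncomputable def Tb (β : ℝ) (x : ℝ) : ℝ := β * x - ⌊β * x⌋

/-- The (n+1)-st digit `ε_{n+1}(x, β) = ⌊β T_β^{n} x⌋` of the β-expansion of `x`. -/
noncomputable def digit (β : ℝ) (x : ℝ) (n : ℕ) : ℕ := (⌊β * (Tb β)^[n] x⌋).toNat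

/-- Strict lexicographical order on sequences of naturals. -/
def lexLt (a b : ℕ → ℕ) : Prop := ∃ k, (∀ j, j < k → a j = b j) ∧ a k < b k

def lexLe (a b : ℕ → ℕ) : Prop := lexLt a b ∨ a = b

/-- A finite word padded with zeros to an infinite sequence. -/
def pad {n : ℕ} (ω : Fin n → ℕ) : ℕ → ℕ := fun k => if h : k < n then ω ⟨k, h⟩ else 0

/-- The prefix of length `m` of a padded word, again padded with zeros. -/
def trunc {n : ℕ} (ω : Fin n → ℕ) (m : ℕ) : ℕ → ℕ := fun k => if k < m then pad ω k else 0

/-- A word `ω` of length `n` is self-admissible if `σ^i ω ≤_lex (ω_1, …, ω_{n-i})`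
for all `1 ≤ i < n` (comparison after padding with zeros). -/
def selfAdmissible {n : ℕ} (ω : Fin n → ℕ) : Prop :=
  ∀ i, 1 ≤ i → i < n → lexLe (fun k => pad ω (k + i)) (trunc ω (n - i))

/-- Lexicographic order on words of the same length. -/
def wordLt {n : ℕ} (ω ω' : Fin n → ℕ) : Prop := lexLt (pad ω) (pad ω')

def wordLe {n : ℕ} (ω ω' : Fin n → ℕ) : Prop := wordLt ω ω' ∨ ω = ω'

/-- The recurrence time `τ(ω)`: the least `1 ≤ k < n` with
`σ^k(ω_1,…,ω_n) = (ω_1,…,ω_{n-k})`, and `n` if there is no such `k`. -/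
noncomputable def tau {n : ℕ} (ω : Fin n → ℕ) : ℕ :=
  sInf ({k | 1 ≤ k ∧ k < n ∧ ∀ j, j < n - k → pad ω (k + j) = pad ω j} ∪ {n})

/-- The cylinder of the word `ω` in the parameter space `(1, ∞)`. -/
def cylP (n : ℕ) (ω : Fin n → ℕ) : Set ℝ := {β : ℝ | 1 < β ∧ ∀ i : Fin n, digit β 1 i = ω i}

/-- The first `n` digits of the β-expansion of `1`. -/
noncomputable def prefixW (β : ℝ) (n : ℕ) : Fin n → ℕ := fun i => digit β 1 i

/-- The `n`-th recurrence time `τ_n(β)` of `β`. -/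
noncomputable def tauN (β : ℝ) (n : ℕ) : ℕ := tau (prefixW β n)

/-- `t_n(β) = n - ⌊n / τ_n(β)⌋ τ_n(β)`. -/
noncomputable def tN (β : ℝ) (n : ℕ) : ℕ := n - (n / tauN β n) * tauN β n

/-- Left endpoint `β̲_n` of the `n`-th cylinder of `β` in the parameter space. -/
noncomputable def lEnd (β : ℝ) (n : ℕ) : ℝ := sInf (cylP n (prefixW β n))

/-- Right endpoint `β̄_n` of the `n`-th cylinder of `β` in the parameter space. -/
noncomputable def rEnd (β : ℝ) (n : ℕ) : ℝ := sSup (cylP n (prefixW β n))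

/-- The set `Σ_β^n` of β-admissible words of length `n`. -/
def SigmaB (β : ℝ) (n : ℕ) : Set (Fin n → ℕ) :=
  {w | ∃ x : ℝ, 0 ≤ x ∧ x < 1 ∧ ∀ i : Fin n, digit β x i = w i}

open Classical in
/-- The infinite β-expansion `ε*(1, β)` of `1`. -/
noncomputable def epsStar (β : ℝ) : ℕ → ℕ :=
  if h : ∃ m, digit β 1 m ≠ 0 ∧ ∀ k, m < k → digit β 1 k = 0 then
    fun n =>
      if n % (h.choose + 1) = h.choose then digit β 1 h.choose - 1
      else digit β 1 (n % (h.choose + 1))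
  else digit β 1

section Aux

open Finset

lemma Tb_eq_fract (β x : ℝ) : Tb β x = Int.fract (β * x) := by
  rw [Tb, Int.fract]

lemma iter_nonneg (β : ℝ) (k : ℕ) : 0 ≤ (Tb β)^[k] 1 := by
  cases k with
  | zero => simp
  | succ m =>
    rw [Function.iterate_succ_apply', Tb_eq_fract]
    exact Int.fract_nonneg _

lemma iter_lt_one (β : ℝ) (k : ℕ) (hk : 1 ≤ k) : (Tb β)^[k] 1 < 1 := by
  obtain ⟨m, rfl⟩ := Nat.exists_eq_succ_of_ne_zero (by omega : k ≠ 0)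
  rw [Function.iterate_succ_apply', Tb_eq_fract]
  exact Int.fract_lt_one _

lemma digit_cast (β : ℝ) (hβ : 0 < β) (k : ℕ) :
    (digit β 1 k : ℝ) = β * (Tb β)^[k] 1 - (Tb β)^[k + 1] 1 := by
  have hx : 0 ≤ β * (Tb β)^[k] 1 := mul_nonneg hβ.le (iter_nonneg β k)
  have h0 : (0 : ℤ) ≤ ⌊β * (Tb β)^[k] 1⌋ := Int.floor_nonneg.2 hx
  have h1 : (digit β 1 k : ℝ) = (⌊β * (Tb β)^[k] 1⌋ : ℝ) := by
    rw [digit]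
    exact_mod_cast congrArg (fun z : ℤ => (z : ℝ)) (Int.toNat_of_nonneg h0)
  rw [h1, Function.iterate_succ_apply']
  show (⌊β * (Tb β)^[k] 1⌋ : ℝ) =
      β * (Tb β)^[k] 1 - (β * (Tb β)^[k] 1 - ⌊β * (Tb β)^[k] 1⌋)
  ring

lemma expand (β : ℝ) (hβ : 0 < β) (n : ℕ) :
    β ^ n = (∑ k ∈ Finset.range n, (digit β 1 k : ℝ) * β ^ (n - 1 - k)) + (Tb β)^[n] 1 := by
  induction n with
  | zero => simp
  | succ n ih =>
    have h1 : β ^ (n + 1) =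
        β * ((∑ k ∈ Finset.range n, (digit β 1 k : ℝ) * β ^ (n - 1 - k)) + (Tb β)^[n] 1) := by
      rw [← ih]; ring
    rw [h1, Finset.sum_range_succ, mul_add, Finset.mul_sum]
    have h2 : ∀ k ∈ Finset.range n,
        β * ((digit β 1 k : ℝ) * β ^ (n - 1 - k)) = (digit β 1 k : ℝ) * β ^ (n + 1 - 1 - k) := by
      intro k hk
      rw [Finset.mem_range] at hk
      have he : n + 1 - 1 - k = (n - 1 - k) + 1 := by omega
      rw [he, pow_succ]; ring
    rw [Finset.sum_congr rfl h2]
    have h3 : β * (Tb β)^[n] 1 = (digit β 1 n : ℝ) * β ^ (n + 1 - 1 - n) + (Tb β)^[n + 1] 1 := by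
      rw [digit_cast β hβ n]
      have he : n + 1 - 1 - n = 0 := by omega
      rw [he, pow_zero]; ring
    rw [h3]; ring

/-- Main algebraic inequality. -/
lemma alg_ineq (n : ℕ) (hn : 1 ≤ n) (w : ℕ → ℕ) (a b : ℝ) (ha : 1 < a) (hab : a < b)
    (hA : ∑ k ∈ Finset.range n, (w k : ℝ) * a ^ (n - 1 - k) ≤ a ^ n) :
    (b - a) * b ^ (n - 1) ≤
      (b ^ n - ∑ k ∈ Finset.range n, (w k : ℝ) * b ^ (n - 1 - k)) -
      (a ^ n - ∑ k ∈ Finset.range n, (w k : ℝ) * a ^ (n - 1 - k)) := by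
  have ha0 : (0 : ℝ) < a := lt_trans one_pos ha
  have hb0 : (0 : ℝ) < b := lt_trans ha0 hab
  set S : ℕ → ℝ := fun m => ∑ j ∈ Finset.range m, b ^ j * a ^ (m - 1 - j) with hS
  have hF1 : ∀ m : ℕ, b ^ m - a ^ m = (b - a) * S m := by
    intro m
    rw [hS, mul_comm]
    exact (geom_sum₂_mul b a m).symm
  have hSnonneg : ∀ m, 0 ≤ S m := by
    intro m
    apply Finset.sum_nonneg
    intro j _
    positivity
  -- F2 : S (n-1-k) * a^(n-1) ≤ S (n-1) * a^(n-1-k) for k < n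
  have hF2 : ∀ k, k < n → S (n - 1 - k) * a ^ (n - 1) ≤ S (n - 1) * a ^ (n - 1 - k) := by
    intro k hk
    rw [hS]
    simp only
    rw [Finset.sum_mul, Finset.sum_mul]
    have hterm : ∀ j ∈ Finset.range (n - 1 - k),
        b ^ j * a ^ (n - 1 - k - 1 - j) * a ^ (n - 1) =
        b ^ j * a ^ (n - 1 - 1 - j) * a ^ (n - 1 - k) := by
      intro j hj
      rw [Finset.mem_range] at hj
      rw [mul_assoc, mul_assoc, ← pow_add, ← pow_add]
      congr 2
      omega
    rw [Finset.sum_congr rfl hterm]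
    apply Finset.sum_le_sum_of_subset_of_nonneg
    · exact Finset.range_subset_range.2 (by omega)
    · intro j _ _
      positivity
  -- F3 : ∑ w k * S (n-1-k) ≤ a * S (n-1)
  have hF3 : ∑ k ∈ Finset.range n, (w k : ℝ) * S (n - 1 - k) ≤ a * S (n - 1) := by
    have hpow : (0 : ℝ) < a ^ (n - 1) := by positivity
    rw [← mul_le_mul_iff_of_pos_right hpow]
    rw [Finset.sum_mul]
    calc ∑ k ∈ Finset.range n, (w k : ℝ) * S (n - 1 - k) * a ^ (n - 1)
        ≤ ∑ k ∈ Finset.range n, (w k : ℝ) * (S (n - 1) * a ^ (n - 1 - k)) := by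
          apply Finset.sum_le_sum
          intro k hk
          rw [Finset.mem_range] at hk
          rw [mul_assoc]
          exact mul_le_mul_of_nonneg_left (hF2 k hk) (Nat.cast_nonneg _)
      _ = S (n - 1) * ∑ k ∈ Finset.range n, (w k : ℝ) * a ^ (n - 1 - k) := by
          rw [Finset.mul_sum]; apply Finset.sum_congr rfl; intro k _; ring
      _ ≤ S (n - 1) * a ^ n := mul_le_mul_of_nonneg_left hA (hSnonneg _)
      _ = a * S (n - 1) * a ^ (n - 1) := by
          have hne : a ^ n = a * a ^ (n - 1) := by
            obtain ⟨m, rfl⟩ := Nat.exists_eq_succ_of_ne_zero (by omega : n ≠ 0)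
            rw [pow_succ]
            simp [mul_comm]
          rw [hne]; ring
  -- F4 : S n = b^(n-1) + a * S (n-1)
  have hF4 : S n = b ^ (n - 1) + a * S (n - 1) := by
    obtain ⟨m, rfl⟩ := Nat.exists_eq_succ_of_ne_zero (by omega : n ≠ 0)
    rw [hS]
    simp only
    rw [Finset.sum_range_succ]
    have h1 : m + 1 - 1 - m = 0 := by omega
    have h2 : m + 1 - 1 = m := by omega
    rw [h1, h2, pow_zero, mul_one, Finset.mul_sum]
    have h3 : ∀ j ∈ Finset.range m, b ^ j * a ^ (m - j) = a * (b ^ j * a ^ (m - 1 - j)) := by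
      intro j hj
      rw [Finset.mem_range] at hj
      have he : m - j = (m - 1 - j) + 1 := by omega
      rw [he, pow_succ]; ring
    rw [Finset.sum_congr rfl h3]
    ring
  -- put things together
  have key : (b ^ n - ∑ k ∈ Finset.range n, (w k : ℝ) * b ^ (n - 1 - k)) -
      (a ^ n - ∑ k ∈ Finset.range n, (w k : ℝ) * a ^ (n - 1 - k)) =
      (b - a) * (S n - ∑ k ∈ Finset.range n, (w k : ℝ) * S (n - 1 - k)) := by
    have hsum : ∑ k ∈ Finset.range n, (w k : ℝ) * b ^ (n - 1 - k) -
        ∑ k ∈ Finset.range n, (w k : ℝ) * a ^ (n - 1 - k) =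
        ∑ k ∈ Finset.range n, (w k : ℝ) * ((b - a) * S (n - 1 - k)) := by
      rw [← Finset.sum_sub_distrib]
      apply Finset.sum_congr rfl
      intro k _
      rw [← hF1, mul_sub]
    have hbn : b ^ n - a ^ n = (b - a) * S n := hF1 n
    have hsum2 : ∑ k ∈ Finset.range n, (w k : ℝ) * ((b - a) * S (n - 1 - k)) =
        (b - a) * ∑ k ∈ Finset.range n, (w k : ℝ) * S (n - 1 - k) := by
      rw [Finset.mul_sum]
      apply Finset.sum_congr rfl
      intro k _
      ring
    nlinarith [hsum, hbn, hsum2]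
  rw [key]
  have hba : 0 < b - a := by linarith
  have : b ^ (n - 1) ≤ S n - ∑ k ∈ Finset.range n, (w k : ℝ) * S (n - 1 - k) := by
    rw [hF4]
    linarith [hF3]
  exact mul_le_mul_of_nonneg_left this hba.le

end Aux

theorem cylinder_length_upper_bound (n : ℕ) (hn : 1 ≤ n) (ω : Fin n → ℕ)
    (hsa : selfAdmissible ω) (hne : (cylP n ω).Nonempty) :
    sSup (cylP n ω) - sInf (cylP n ω) ≤ (sSup (cylP n ω)) ^ (1 - (n : ℤ)) := by
  set C := cylP n ω with hC
  -- digits of members agree with pad ω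
  have hdig : ∀ β ∈ C, ∀ k, k < n → (digit β 1 k : ℝ) = (pad ω k : ℝ) := by
    intro β hβ k hk
    have := hβ.2 ⟨k, hk⟩
    rw [pad]
    simp only [hk, dif_pos]
    exact_mod_cast this
  -- the fundamental quantity
  have hQ : ∀ β ∈ C,
      β ^ n - ∑ k ∈ Finset.range n, (pad ω k : ℝ) * β ^ (n - 1 - k) = (Tb β)^[n] 1 := by
    intro β hβ
    have hb0 : (0:ℝ) < β := lt_trans one_pos hβ.1
    have he := expand β hb0 n
    have hs : ∑ k ∈ Finset.range n, (digit β 1 k : ℝ) * β ^ (n - 1 - k) =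
        ∑ k ∈ Finset.range n, (pad ω k : ℝ) * β ^ (n - 1 - k) := by
      apply Finset.sum_congr rfl
      intro k hk
      rw [Finset.mem_range] at hk
      rw [hdig β hβ k hk]
    rw [hs] at he
    linarith
  -- key pairwise inequality
  have hkey : ∀ a ∈ C, ∀ b ∈ C, (b - a) * b ^ (n - 1) ≤ 1 := by
    intro a ha b hb
    have ha1 : 1 < a := ha.1
    have hb1 : 1 < b := hb.1
    rcases lt_trichotomy a b with hab | hab | hab
    · have hQa := hQ a ha
      have hQb := hQ b hb
      have hQa0 : 0 ≤ (Tb a)^[n] 1 := iter_nonneg a n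
      have hQb1 : (Tb b)^[n] 1 < 1 := iter_lt_one b n hn
      have hA : ∑ k ∈ Finset.range n, (pad ω k : ℝ) * a ^ (n - 1 - k) ≤ a ^ n := by linarith
      have := alg_ineq n hn (pad ω) a b ha1 hab hA
      linarith
    · rw [hab]; simp
    · have h1 : b - a ≤ 0 := by linarith
      have h2 : (0:ℝ) ≤ b ^ (n - 1) := by positivity
      have := mul_nonpos_of_nonpos_of_nonneg h1 h2
      linarith
  -- boundedness
  have hbdd : BddAbove C := by
    refine ⟨(ω ⟨0, hn⟩ : ℝ) + 1, ?_⟩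
    intro β hβ
    have h0 : digit β 1 0 = ω ⟨0, hn⟩ := hβ.2 ⟨0, hn⟩
    have hβ1 : 1 < β := hβ.1
    have hb0 : (0:ℝ) < β := lt_trans one_pos hβ1
    have : digit β 1 0 = (⌊β⌋).toNat := by
      rw [digit]
      simp [Tb]
    rw [this] at h0
    have hfl : (0:ℤ) ≤ ⌊β⌋ := Int.floor_nonneg.2 hb0.le
    have h2 : ((⌊β⌋).toNat : ℤ) = ⌊β⌋ := Int.toNat_of_nonneg hfl
    have h3 : β < (⌊β⌋ : ℝ) + 1 := Int.lt_floor_add_one β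
    have h4 : ((⌊β⌋).toNat : ℝ) = ((⌊β⌋ : ℤ) : ℝ) := by exact_mod_cast h2
    have h5 : ((ω ⟨0, hn⟩ : ℕ) : ℝ) = ((⌊β⌋ : ℤ) : ℝ) := by rw [← h0]; exact h4
    rw [h5]
    linarith
  have hbdd' : BddBelow C := ⟨1, fun β hβ => hβ.1.le⟩
  -- closure argument
  have hs_cl : sSup C ∈ closure C := csSup_mem_closure hne hbdd
  have hi_cl : sInf C ∈ closure C := csInf_mem_closure hne hbdd'
  have hcont : Continuous (fun p : ℝ × ℝ => (p.2 - p.1) * p.2 ^ (n - 1)) := by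
    fun_prop
  have hclosed : IsClosed {p : ℝ × ℝ | (p.2 - p.1) * p.2 ^ (n - 1) ≤ 1} :=
    isClosed_le hcont continuous_const
  have hsub : C ×ˢ C ⊆ {p : ℝ × ℝ | (p.2 - p.1) * p.2 ^ (n - 1) ≤ 1} :=
    fun p hp => hkey p.1 hp.1 p.2 hp.2
  have hmem : (sInf C, sSup C) ∈ closure (C ×ˢ C) := by
    rw [closure_prod_eq]
    exact ⟨hi_cl, hs_cl⟩
  have h1 : (sSup C - sInf C) * (sSup C) ^ (n - 1) ≤ 1 :=
    (hclosed.closure_subset_iff.2 hsub) hmem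
  -- final manipulation
  obtain ⟨β, hβ⟩ := hne
  have hs1 : 1 < sSup C := lt_of_lt_of_le hβ.1 (le_csSup hbdd hβ)
  have hsp : (0:ℝ) < (sSup C) ^ (n - 1) := by positivity
  have hcast : (1 : ℤ) - (n : ℤ) = -(((n - 1 : ℕ) : ℤ)) := by
    have : ((n - 1 : ℕ) : ℤ) = (n : ℤ) - 1 := by omega
    rw [this]; ring
  rw [hcast, zpow_neg, zpow_natCast, ← one_div]
  exact (le_div_iff₀ hsp).2 h1
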